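/- Let G be a finite simple graph that is strongly regular with parameters (n, d, λ, μ), let Ḡ be its complement, and set t := √((μ−λ)² + 4(d−μ)). Then θ'(G) = θ(G) = n(t+μ−λ)/(2d+t+μ−λ) and θ'(Ḡ) = θ(Ḡ) = 1 + 2d/(t+μ−λ); in particular, θ'(G) · θ'(Ḡ) = n and θ(G) · θ(Ḡ) = n. -/

import Mathlib

open scoped Classical

noncomputable def lovaszTheta {V : Type*} [Fintype V] (G : SimpleGraph V) : ℝ :=
  sSup { x : ℝ | ∃ B : Matrix V V ℝ, B.PosSemidef ∧ B.trace = 1 ∧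
    (∀ i j, G.Adj i j → B i j = 0) ∧ x = ∑ i, ∑ j, B i j }

noncomputable def schrijverTheta {V : Type*} [Fintype V] (G : SimpleGraph V) : ℝ :=
  sSup { x : ℝ | ∃ B : Matrix V V ℝ, B.PosSemidef ∧ B.trace = 1 ∧
    (∀ i j, G.Adj i j → B i j = 0) ∧ (∀ i j, 0 ≤ B i j) ∧ x = ∑ i, ∑ j, B i j }

noncomputable def nbhd {V : Type*} [Fintype V] (G : SimpleGraph V) (v : V) : Finset V :=
  Finset.univ.filter fun w => G.Adj v w

/-- `G` is strongly regular with parameters `(n, d, l, m)`: it has `n` vertices, is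
`d`-regular, adjacent vertices have `l` common neighbors, distinct nonadjacent vertices
have `m` common neighbors, and `G` is neither complete nor empty. -/
def IsSRG {V : Type*} [Fintype V] (G : SimpleGraph V) (n d l m : ℕ) : Prop :=
  Fintype.card V = n ∧
  (∀ v, (nbhd G v).card = d) ∧
  (∀ v w, G.Adj v w → (nbhd G v ∩ nbhd G w).card = l) ∧
  (∀ v w, v ≠ w → ¬ G.Adj v w → (nbhd G v ∩ nbhd G w).card = m) ∧
  G ≠ ⊤ ∧ G ≠ ⊥

namespace SRG14

open Matrix Finset

variable {V : Type*} [Fintype V]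

lemma psd_smul {c : ℝ} (hc : 0 ≤ c) {M : Matrix V V ℝ} (hM : M.PosSemidef) :
    (c • M).PosSemidef := by
  refine ⟨?_, fun x => ?_⟩
  · have := hM.1
    unfold Matrix.IsHermitian at this ⊢
    rw [Matrix.conjTranspose_smul, this, star_trivial]
  · exact (hM.smul hc).2 x

lemma trace_mul_nonneg {B C : Matrix V V ℝ} (hB : B.PosSemidef) (hC : C.PosSemidef) :
    0 ≤ (B * C).trace := by
  obtain ⟨E, rfl⟩ : ∃ E : Matrix V V ℝ, B = Eᴴ * E := by
    classical
    open scoped MatrixOrder in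
    obtain ⟨X, hX, -, rfl⟩ := CFC.exists_sqrt_of_isSelfAdjoint_of_quasispectrumRestricts
      hB.isHermitian (QuasispectrumRestricts.nnreal_of_nonneg hB.nonneg)
    exact ⟨X, by rw [← Matrix.star_eq_conjTranspose, hX.star_eq]⟩
  obtain ⟨F, rfl⟩ : ∃ F : Matrix V V ℝ, C = Fᴴ * F := by
    classical
    open scoped MatrixOrder in
    obtain ⟨X, hX, -, rfl⟩ := CFC.exists_sqrt_of_isSelfAdjoint_of_quasispectrumRestricts
      hC.isHermitian (QuasispectrumRestricts.nnreal_of_nonneg hC.nonneg)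
    exact ⟨X, by rw [← Matrix.star_eq_conjTranspose, hX.star_eq]⟩
  have h1 : (Eᴴ * E) * (Fᴴ * F) = Eᴴ * ((E * Fᴴ * F)) := by
    simp only [Matrix.mul_assoc]
  rw [h1, Matrix.trace_mul_comm]
  have h2 : (E * Fᴴ * F) * Eᴴ = (F * Eᴴ)ᴴ * (F * Eᴴ) := by
    rw [Matrix.conjTranspose_mul, Matrix.conjTranspose_conjTranspose]
    simp only [Matrix.mul_assoc]
  rw [h2]
  have : ((F * Eᴴ)ᴴ * (F * Eᴴ)).trace = ∑ j, ∑ i, (F * Eᴴ) i j * (F * Eᴴ) i j := by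
    simp [Matrix.trace, Matrix.diag, Matrix.mul_apply, Matrix.conjTranspose_apply, mul_comm]
  rw [this]
  apply Finset.sum_nonneg; intro j _
  apply Finset.sum_nonneg; intro i _
  exact mul_self_nonneg _

/-- The master positive semidefiniteness lemma for matrices in the adjacency algebra of
a strongly regular graph. -/
lemma master (A J : Matrix V V ℝ) (nn dd m r s a b c : ℝ)
    (hAt : Aᴴ = A) (hJt : Jᴴ = J)
    (hJJ : J * J = nn • J) (hAJ : A * J = dd • J) (hJA : J * A = dd • J)
    (hA2 : A * A = (r + s) • A - (r * s) • (1 : Matrix V V ℝ) + m • J)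
    (hnn : 0 < nn) (hts : s < r)
    (h1 : 0 ≤ a + b * dd + c * nn) (h2 : 0 ≤ a + b * r) (h3 : 0 ≤ a + b * s) :
    (a • (1 : Matrix V V ℝ) + b • A + c • J).PosSemidef := by
  have hnn0 : nn ≠ 0 := ne_of_gt hnn
  have hrs0 : r - s ≠ 0 := sub_ne_zero.mpr (ne_of_gt hts)
  set P : Matrix V V ℝ := nn⁻¹ • J with hPdef
  set Q : Matrix V V ℝ := 1 - P with hQdef
  have hPsymm : Pᴴ = P := by
    rw [hPdef, Matrix.conjTranspose_smul, hJt, star_trivial]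
  have hPP : P * P = P := by
    rw [hPdef, Matrix.smul_mul, Matrix.mul_smul, hJJ, smul_smul, smul_smul]
    congr 1
    field_simp
  have hPpsd : P.PosSemidef := by
    have h := Matrix.posSemidef_conjTranspose_mul_self P
    rwa [hPsymm, hPP] at h
  have hAP : A * P = (dd * nn⁻¹) • J := by
    rw [hPdef, Matrix.mul_smul, hAJ, smul_smul, mul_comm]
  have hPA : P * A = (dd * nn⁻¹) • J := by
    rw [hPdef, Matrix.smul_mul, hJA, smul_smul, mul_comm]
  have hJP : J * P = J := by
    rw [hPdef, Matrix.mul_smul, hJJ, smul_smul, inv_mul_cancel₀ hnn0, one_smul]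
  have hJQ : J * Q = 0 := by
    rw [hQdef, Matrix.mul_sub, Matrix.mul_one, hJP, sub_self]
  have hQQ : Q * Q = Q := by
    rw [hQdef]
    simp only [Matrix.sub_mul, Matrix.mul_sub, Matrix.one_mul, Matrix.mul_one, hPP]
    abel
  have hQsymm : Qᴴ = Q := by
    rw [hQdef, Matrix.conjTranspose_sub, Matrix.conjTranspose_one, hPsymm]
  have hAQ : A * Q = Q * A := by
    rw [hQdef, Matrix.mul_sub, Matrix.sub_mul, Matrix.mul_one, Matrix.one_mul, hAP, hPA]
  -- the two square factors
  have hcomm : ∀ x : ℝ, (A - x • (1 : Matrix V V ℝ)) * Q = Q * (A - x • 1) := by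
    intro x
    simp only [Matrix.sub_mul, Matrix.mul_sub, smul_mul_assoc, mul_smul_comm,
      Matrix.one_mul, Matrix.mul_one, hAQ]
  have hsqQ : ∀ x : ℝ, ((A - x • (1 : Matrix V V ℝ)) * Q)ᴴ * ((A - x • 1) * Q)
      = ((A - x • 1) * (A - x • 1)) * Q := by
    intro x
    have hXt : (A - x • (1 : Matrix V V ℝ))ᴴ = A - x • 1 := by
      rw [Matrix.conjTranspose_sub, Matrix.conjTranspose_smul, hAt,
        Matrix.conjTranspose_one, star_trivial]
    rw [Matrix.conjTranspose_mul, hQsymm, hXt]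
    calc Q * (A - x • 1) * ((A - x • 1) * Q)
        = (A - x • 1) * Q * ((A - x • 1) * Q) := by rw [← hcomm]
      _ = (A - x • 1) * (Q * ((A - x • 1) * Q)) := by rw [Matrix.mul_assoc]
      _ = (A - x • 1) * ((Q * (A - x • 1)) * Q) := by rw [Matrix.mul_assoc]
      _ = (A - x • 1) * (((A - x • 1) * Q) * Q) := by rw [← hcomm]
      _ = (A - x • 1) * ((A - x • 1) * (Q * Q)) := by rw [Matrix.mul_assoc]
      _ = (A - x • 1) * ((A - x • 1) * Q) := by rw [hQQ]
      _ = ((A - x • 1) * (A - x • 1)) * Q := by rw [Matrix.mul_assoc]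
  have hsq : ∀ x : ℝ, (A - x • (1 : Matrix V V ℝ)) * (A - x • 1)
      = (r + s - 2 * x) • A + (x * x - r * s) • (1 : Matrix V V ℝ) + m • J := by
    intro x
    simp only [Matrix.sub_mul, Matrix.mul_sub, smul_mul_assoc, mul_smul_comm,
      Matrix.one_mul, Matrix.mul_one, hA2, smul_smul]
    module
  have hMM : ∀ x : ℝ, ((A - x • (1 : Matrix V V ℝ)) * Q)ᴴ * ((A - x • 1) * Q)
      = (r + s - 2 * x) • (A * Q) + (x * x - r * s) • Q := by
    intro x
    rw [hsqQ x, hsq x]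
    simp only [Matrix.add_mul, smul_mul_assoc, Matrix.one_mul, hJQ, smul_zero, add_zero]
  have hAQ' : A * Q = A - (dd * nn⁻¹) • J := by
    rw [hQdef, Matrix.mul_sub, Matrix.mul_one, hAP]
  -- the decomposition
  have hdecomp : a • (1 : Matrix V V ℝ) + b • A + c • J
      = (a + b * dd + c * nn) • P
        + ((a + b * r) / (r - s) ^ 2) • (((A - s • (1:Matrix V V ℝ)) * Q)ᴴ * ((A - s • 1) * Q))
        + ((a + b * s) / (r - s) ^ 2) • (((A - r • (1:Matrix V V ℝ)) * Q)ᴴ * ((A - r • 1) * Q)) := by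
    rw [hMM s, hMM r, hAQ', hQdef, hPdef]
    match_scalars <;> field_simp <;> ring
  rw [hdecomp]
  refine Matrix.PosSemidef.add (Matrix.PosSemidef.add (psd_smul h1 hPpsd) (psd_smul ?_ ?_))
    (psd_smul ?_ ?_)
  · exact div_nonneg h2 (sq_nonneg _)
  · exact Matrix.posSemidef_conjTranspose_mul_self _
  · exact div_nonneg h3 (sq_nonneg _)
  · exact Matrix.posSemidef_conjTranspose_mul_self _

/-- Weak duality bound. -/
lemma dual_bound {G : SimpleGraph V} {κ : ℝ} {Z : Matrix V V ℝ}
    (hY : ((κ • (1 : Matrix V V ℝ) - Matrix.of (fun _ _ => (1:ℝ))) + Z).PosSemidef)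
    (hZ : ∀ i j, ¬ G.Adj i j → Z i j = 0)
    {B : Matrix V V ℝ} (hB : B.PosSemidef) (htr : B.trace = 1)
    (h0 : ∀ i j, G.Adj i j → B i j = 0) :
    ∑ i, ∑ j, B i j ≤ κ := by
  have hnn := trace_mul_nonneg hB hY
  have hexp : B * ((κ • (1 : Matrix V V ℝ) - Matrix.of (fun _ _ => (1:ℝ))) + Z)
      = κ • B - B * Matrix.of (fun _ _ => (1:ℝ)) + B * Z := by
    rw [Matrix.mul_add, Matrix.mul_sub, Matrix.mul_smul, Matrix.mul_one]
  rw [hexp] at hnn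
  have h1 : (B * Matrix.of (fun _ _ => (1:ℝ))).trace = ∑ i, ∑ j, B i j := by
    simp [Matrix.trace, Matrix.diag, Matrix.mul_apply]
  have h2 : (B * Z).trace = 0 := by
    simp only [Matrix.trace, Matrix.diag, Matrix.mul_apply]
    apply Finset.sum_eq_zero; intro i _
    apply Finset.sum_eq_zero; intro k _
    by_cases hadj : G.Adj k i
    · rw [h0 i k hadj.symm, zero_mul]
    · rw [hZ k i hadj, mul_zero]
  rw [Matrix.trace_add, Matrix.trace_sub, Matrix.trace_smul, htr, h1, h2, smul_eq_mul,
    mul_one, add_zero] at hnn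
  linarith

lemma sSup_eq_of_mem_of_ub {S : Set ℝ} {κ : ℝ} (h1 : κ ∈ S) (h2 : ∀ x ∈ S, x ≤ κ) :
    sSup S = κ :=
  le_antisymm (csSup_le ⟨κ, h1⟩ h2) (le_csSup ⟨κ, h2⟩ h1)

lemma srg_facts {G : SimpleGraph V} {n d lam mu : ℕ}
    (hn : Fintype.card V = n)
    (hdeg : ∀ v, (nbhd G v).card = d)
    (hlam : ∀ v w, G.Adj v w → (nbhd G v ∩ nbhd G w).card = lam)
    (hmu : ∀ v w, v ≠ w → ¬ G.Adj v w → (nbhd G v ∩ nbhd G w).card = mu)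
    (htop : G ≠ ⊤) (hbot : G ≠ ⊥) :
    1 ≤ d ∧ lam + 1 ≤ d ∧ mu ≤ d ∧
      ∃ m', 1 ≤ m' ∧ n = m' + (1 + d) ∧ d * d = d * (1 + lam) + m' * mu := by
  obtain ⟨v₀, w₀, hvw⟩ : ∃ v w, G.Adj v w := by
    by_contra hc
    push_neg at hc
    exact hbot (by ext v w; simp [hc v w])
  obtain ⟨v, w, hne, hnadj⟩ : ∃ v w, v ≠ w ∧ ¬ G.Adj v w := by
    by_contra hc
    push_neg at hc
    apply htop
    ext a b
    simp only [SimpleGraph.top_adj]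
    exact ⟨fun hab => hab.ne, fun hab => hc a b hab⟩
  have hmemnbhd : ∀ a b : V, b ∈ nbhd G a ↔ G.Adj a b := by
    intro a b; simp [nbhd]
  have hd1 : 1 ≤ d := by
    rw [← hdeg v₀]
    exact Finset.card_pos.mpr ⟨w₀, (hmemnbhd v₀ w₀).mpr hvw⟩
  have hlam1 : lam + 1 ≤ d := by
    have hsub : nbhd G v₀ ∩ nbhd G w₀ ⊆ (nbhd G v₀).erase w₀ := by
      intro x hx
      rw [Finset.mem_inter, hmemnbhd, hmemnbhd] at hx
      rw [Finset.mem_erase, hmemnbhd]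
      exact ⟨fun hxw => (hxw ▸ hx.2).ne rfl, hx.1⟩
    have := Finset.card_le_card hsub
    rw [hlam v₀ w₀ hvw, Finset.card_erase_of_mem ((hmemnbhd v₀ w₀).mpr hvw), hdeg v₀] at this
    omega
  have hmule : mu ≤ d := by
    have := Finset.card_le_card (Finset.inter_subset_left (s₁ := nbhd G v) (s₂ := nbhd G w))
    rw [hmu v w hne hnadj, hdeg v] at this
    exact this
  refine ⟨hd1, hlam1, hmule, ?_⟩
  set S : Finset V := nbhd G v with hSdef
  set T : Finset V := Finset.univ \ insert v S with hTdef
  have hvS : v ∉ S := by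
    rw [hSdef, hmemnbhd]
    exact G.irrefl
  have hcardS : S.card = d := hdeg v
  have hcardins : (insert v S).card = 1 + d := by
    rw [Finset.card_insert_of_notMem hvS, hcardS]
    omega
  have hT : T.card + (1 + d) = n := by
    have h1 := Finset.card_le_univ (insert v S)
    rw [hTdef, Finset.card_sdiff_of_subset (Finset.subset_univ _), Finset.card_univ, hn] at *
    omega
  have hwT : w ∈ T := by
    rw [hTdef, Finset.mem_sdiff, Finset.mem_insert]
    refine ⟨Finset.mem_univ _, ?_⟩
    rw [hmemnbhd]
    push_neg
    exact ⟨hne.symm, hnadj⟩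
  have hTpos : 1 ≤ T.card := Finset.card_pos.mpr ⟨w, hwT⟩
  have hu : ∀ u ∈ S, (T.filter (fun x => G.Adj u x)).card + (1 + lam) = d := by
    intro u huS
    have hadj_vu : G.Adj v u := (hmemnbhd v u).mp huS
    have hadj_uv : G.Adj u v := hadj_vu.symm
    have e1 : T.filter (fun x => G.Adj u x) = nbhd G u \ insert v S := by
      ext x
      rw [Finset.mem_filter, hTdef, Finset.mem_sdiff, Finset.mem_sdiff, hmemnbhd]
      constructor
      · rintro ⟨⟨-, hx2⟩, hx3⟩; exact ⟨hx3, hx2⟩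
      · rintro ⟨hx1, hx2⟩; exact ⟨⟨Finset.mem_univ _, hx2⟩, hx1⟩
    have e2 : nbhd G u ∩ insert v S = insert v (nbhd G u ∩ S) := by
      ext x
      rw [Finset.mem_inter, Finset.mem_insert, Finset.mem_insert, Finset.mem_inter, hmemnbhd, hmemnbhd]
      constructor
      · rintro ⟨hux, (rfl | hxS)⟩
        · exact Or.inl rfl
        · exact Or.inr ⟨hux, hxS⟩
      · rintro (rfl | ⟨hux, hxS⟩)
        · exact ⟨hadj_uv, Or.inl rfl⟩
        · exact ⟨hux, Or.inr hxS⟩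
    have e4 : v ∉ nbhd G u ∩ S := fun hc => hvS (Finset.mem_inter.mp hc).2
    have e3 : (nbhd G u ∩ S).card = lam := hlam u v hadj_uv
    have e5 : (nbhd G u ∩ insert v S).card = 1 + lam := by
      rw [e2, Finset.card_insert_of_notMem e4, e3]
      omega
    have e6 : (nbhd G u \ insert v S).card + (nbhd G u ∩ insert v S).card = d := by
      rw [Finset.card_sdiff_add_card_inter, hdeg]
    rw [e1]
    omega
  have hx : ∀ x ∈ T, (S.filter (fun u => G.Adj u x)).card = mu := by
    intro x hxT
    rw [hTdef, Finset.mem_sdiff, Finset.mem_insert] at hxT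
    push_neg at hxT
    obtain ⟨-, hxv, hxS⟩ := hxT
    rw [hmemnbhd] at hxS
    have e1 : S.filter (fun u => G.Adj u x) = nbhd G v ∩ nbhd G x := by
      ext u
      rw [Finset.mem_filter, Finset.mem_inter, hmemnbhd, hmemnbhd]
      exact ⟨fun ⟨h1, h2⟩ => ⟨h1, h2.symm⟩, fun ⟨h1, h2⟩ => ⟨h1, h2.symm⟩⟩
    rw [e1]
    exact hmu v x (fun hvx => hxv hvx.symm) hxS
  have hdc : ∑ u ∈ S, (T.filter (fun x => G.Adj u x)).card
      = ∑ x ∈ T, (S.filter (fun u => G.Adj u x)).card := by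
    simp_rw [Finset.card_filter]
    exact Finset.sum_comm
  have hL : (∑ u ∈ S, (T.filter (fun x => G.Adj u x)).card) + d * (1 + lam) = d * d := by
    have h1 : ∑ u ∈ S, ((T.filter (fun x => G.Adj u x)).card + (1 + lam)) = ∑ _u ∈ S, d :=
      Finset.sum_congr rfl hu
    rw [Finset.sum_add_distrib, Finset.sum_const, Finset.sum_const, hcardS, smul_eq_mul,
      smul_eq_mul] at h1
    omega
  have hR : ∑ x ∈ T, (S.filter (fun u => G.Adj u x)).card = T.card * mu := by
    rw [Finset.sum_congr rfl hx, Finset.sum_const, smul_eq_mul]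
  exact ⟨T.card, hTpos, by omega, by omega⟩


end SRG14

open Matrix in
set_option maxHeartbeats 2000000 in
theorem stmt14 {V : Type*} [Fintype V] (G : SimpleGraph V) (n d lam mu : ℕ)
    (h : IsSRG G n d lam mu) (t : ℝ)
    (ht : t = Real.sqrt (((mu : ℝ) - (lam : ℝ)) ^ 2 + 4 * ((d : ℝ) - (mu : ℝ)))) :
    schrijverTheta G =
      (n : ℝ) * (t + (mu : ℝ) - (lam : ℝ)) /
        (2 * (d : ℝ) + t + (mu : ℝ) - (lam : ℝ)) ∧
    lovaszTheta G =
      (n : ℝ) * (t + (mu : ℝ) - (lam : ℝ)) /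
        (2 * (d : ℝ) + t + (mu : ℝ) - (lam : ℝ)) ∧
    schrijverTheta Gᶜ = 1 + 2 * (d : ℝ) / (t + (mu : ℝ) - (lam : ℝ)) ∧
    lovaszTheta Gᶜ = 1 + 2 * (d : ℝ) / (t + (mu : ℝ) - (lam : ℝ)) ∧
    schrijverTheta G * schrijverTheta Gᶜ = (n : ℝ) ∧
    lovaszTheta G * lovaszTheta Gᶜ = (n : ℝ) := by
  classical
  obtain ⟨hn, hdeg, hlamh, hmuh, htop, hbot⟩ := h
  obtain ⟨hd1, hlam1, hmule, m', hm'1, hm'n, hm'id⟩ :=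
    SRG14.srg_facts hn hdeg hlamh hmuh htop hbot
  -- real number facts
  have hD1 : (1:ℝ) ≤ (d:ℝ) := by exact_mod_cast hd1
  have hL1 : (lam:ℝ) + 1 ≤ (d:ℝ) := by exact_mod_cast hlam1
  have hMle : (mu:ℝ) ≤ (d:ℝ) := by exact_mod_cast hmule
  have hE4 : (n:ℝ) = (m':ℝ) + 1 + (d:ℝ) := by
    have hq : n = m' + 1 + d := by omega
    exact_mod_cast hq
  have hE3 : (d:ℝ) * (d:ℝ) = (d:ℝ) * (1 + (lam:ℝ)) + (m':ℝ) * (mu:ℝ) := by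
    exact_mod_cast hm'id
  have hm'R : (1:ℝ) ≤ (m':ℝ) := by exact_mod_cast hm'1
  have hND : (d:ℝ) + 2 ≤ (n:ℝ) := by linarith
  have hN0 : (0:ℝ) < (n:ℝ) := by linarith
  have hMDr : (mu:ℝ) + 1 ≤ (d:ℝ) ∨ (lam:ℝ) + 1 ≤ (mu:ℝ) := by
    have hq : mu + 1 ≤ d ∨ lam + 1 ≤ mu := by omega
    rcases hq with h' | h'
    · exact Or.inl (by exact_mod_cast h')
    · exact Or.inr (by exact_mod_cast h')
  have ht0 : 0 ≤ t := ht ▸ Real.sqrt_nonneg _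
  have ht2 : t ^ 2 = ((mu:ℝ) - (lam:ℝ)) ^ 2 + 4 * ((d:ℝ) - (mu:ℝ)) := by
    rw [ht]
    exact Real.sq_sqrt (by linarith [sq_nonneg ((mu:ℝ) - (lam:ℝ))])
  have htpos : 0 < t := by
    rw [ht]
    apply Real.sqrt_pos.mpr
    rcases hMDr with h' | h'
    · linarith [sq_nonneg ((mu:ℝ) - (lam:ℝ))]
    · have h1 : (1:ℝ) ≤ (mu:ℝ) - (lam:ℝ) := by linarith
      have h2 : (1:ℝ) ≤ ((mu:ℝ) - (lam:ℝ)) ^ 2 := by nlinarith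
      linarith
  obtain ⟨r, hrdef⟩ : ∃ r : ℝ, r = ((lam:ℝ) - (mu:ℝ) + t) / 2 := ⟨_, rfl⟩
  obtain ⟨s, hsdef⟩ : ∃ s : ℝ, s = ((lam:ℝ) - (mu:ℝ) - t) / 2 := ⟨_, rfl⟩
  have hsum : r + s = (lam:ℝ) - (mu:ℝ) := by rw [hrdef, hsdef]; ring
  have hdiff : r - s = t := by rw [hrdef, hsdef]; ring
  have hrs : r * s = (mu:ℝ) - (d:ℝ) := by
    rw [hrdef, hsdef]; linear_combination (-(1:ℝ)/4) * ht2
  have hts : s < r := by rw [hrdef, hsdef]; linarith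
  have hs0 : s < 0 := by
    rw [hsdef]
    rcases hMDr with h' | h'
    · have hlt : ((lam:ℝ) - (mu:ℝ)) ^ 2 < t ^ 2 := by
        have : ((lam:ℝ) - (mu:ℝ)) ^ 2 = ((mu:ℝ) - (lam:ℝ)) ^ 2 := by ring
        linarith [ht2]
      by_contra hcon
      push_neg at hcon
      have h1 : t ≤ (lam:ℝ) - (mu:ℝ) := by linarith
      have h2 : t ^ 2 ≤ ((lam:ℝ) - (mu:ℝ)) ^ 2 := by
        have h3 : 0 ≤ (lam:ℝ) - (mu:ℝ) := le_trans ht0 h1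
        exact pow_le_pow_left₀ ht0 h1 2
      linarith
    · linarith
  have hr0 : 0 ≤ r := by
    rw [hrdef]
    have hle : ((mu:ℝ) - (lam:ℝ)) ^ 2 ≤ t ^ 2 := by linarith [ht2]
    by_contra hcon
    push_neg at hcon
    have h1 : t < (mu:ℝ) - (lam:ℝ) := by linarith
    have h2 : t ^ 2 < ((mu:ℝ) - (lam:ℝ)) ^ 2 := by
      exact pow_lt_pow_left₀ h1 ht0 (by norm_num)
    linarith
  have hDs : 0 < (d:ℝ) - s := by linarith
  have h1r : 0 < 1 + r := by linarith
  have hkey : ((n:ℝ) - (d:ℝ) + r) * ((d:ℝ) - s) + (n:ℝ) * s * (1 + r) = 0 := by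
    linear_combination (d:ℝ) * hsum + ((n:ℝ) - 1) * hrs + (mu:ℝ) * hE4 - hE3
  have e2s : t + (mu:ℝ) - (lam:ℝ) = -2 * s := by rw [hsdef]; ring
  have e2d : 2 * (d:ℝ) + t + (mu:ℝ) - (lam:ℝ) = 2 * ((d:ℝ) - s) := by rw [hsdef]; ring
  obtain ⟨κ₁, hκ₁def⟩ : ∃ x : ℝ,
      x = (n : ℝ) * (t + (mu : ℝ) - (lam : ℝ)) / (2 * (d : ℝ) + t + (mu : ℝ) - (lam : ℝ)) :=
    ⟨_, rfl⟩
  obtain ⟨κ₂, hκ₂def⟩ : ∃ x : ℝ, x = 1 + 2 * (d : ℝ) / (t + (mu : ℝ) - (lam : ℝ)) := ⟨_, rfl⟩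
  have hκ₁ : κ₁ * ((d:ℝ) - s) = -((n:ℝ) * s) := by
    rw [hκ₁def, e2s, e2d]
    field_simp
  have hκ₂ : κ₂ * s = s - (d:ℝ) := by
    rw [hκ₂def, e2s]
    field_simp [hs0.ne]
    ring
  have hκ₂0 : 0 ≤ κ₂ := by
    rcases le_or_gt 0 κ₂ with hcp | hcp
    · exact hcp
    · exfalso
      have h1 : 0 < κ₂ * s := mul_pos_of_neg_of_neg hcp hs0
      linarith [hκ₂, hD1]
  -- matrices
  set A : Matrix V V ℝ := G.adjMatrix ℝ with hAdef
  set Jm : Matrix V V ℝ := Matrix.of (fun _ _ => (1:ℝ)) with hJdef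
  have hAt : Aᴴ = A := by
    rw [hAdef, Matrix.conjTranspose_eq_transpose_of_trivial, SimpleGraph.transpose_adjMatrix]
  have hJt : Jmᴴ = Jm := by
    ext i j
    simp [hJdef, Matrix.conjTranspose_apply]
  have hJJ : Jm * Jm = (n:ℝ) • Jm := by
    ext i j
    simp only [hJdef, Matrix.mul_apply, Matrix.of_apply, Matrix.smul_apply, smul_eq_mul,
      mul_one]
    rw [Finset.sum_const, Finset.card_univ, hn, nsmul_eq_mul, mul_one]
  have hrow : ∀ i, ∑ k, A i k = (d:ℝ) := by
    intro i
    simp only [hAdef, SimpleGraph.adjMatrix_apply]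
    rw [Finset.sum_boole]
    have hfil : Finset.univ.filter (fun k => G.Adj i k) = nbhd G i := rfl
    rw [hfil, hdeg i]
  have hcol : ∀ j, ∑ k, A k j = (d:ℝ) := by
    intro j
    simp only [hAdef, SimpleGraph.adjMatrix_apply]
    rw [Finset.sum_boole]
    have hfil : Finset.univ.filter (fun k => G.Adj k j) = nbhd G j := by
      ext x
      simp [nbhd, G.adj_comm]
    rw [hfil, hdeg j]
  have hAJ : A * Jm = (d:ℝ) • Jm := by
    ext i j
    simp only [Matrix.mul_apply, hJdef, Matrix.of_apply, Matrix.smul_apply, smul_eq_mul,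
      mul_one]
    exact hrow i
  have hJA : Jm * A = (d:ℝ) • Jm := by
    ext i j
    simp only [Matrix.mul_apply, hJdef, Matrix.of_apply, Matrix.smul_apply, smul_eq_mul,
      mul_one, one_mul]
    exact hcol j
  have hcommon : ∀ i j, ∑ k, A i k * A k j = ((nbhd G i ∩ nbhd G j).card : ℝ) := by
    intro i j
    have hterm : ∀ k, A i k * A k j = if (G.Adj i k ∧ G.Adj j k) then (1:ℝ) else 0 := by
      intro k
      simp only [hAdef, SimpleGraph.adjMatrix_apply]
      by_cases h1 : G.Adj i k
      · by_cases h2 : G.Adj j k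
        · have h2' : G.Adj k j := h2.symm
          simp [h1, h2, h2']
        · have h2' : ¬ G.Adj k j := fun hc => h2 hc.symm
          simp [h1, h2, h2']
      · simp [h1]
    rw [Finset.sum_congr rfl (fun k _ => hterm k), Finset.sum_boole]
    congr 1
    have hfil : Finset.univ.filter (fun k => G.Adj i k ∧ G.Adj j k) = nbhd G i ∩ nbhd G j := by
      ext x
      simp [nbhd]
    rw [hfil]
  have hA2 : A * A = (r + s) • A - (r * s) • (1 : Matrix V V ℝ) + (mu:ℝ) • Jm := by
    ext i j
    rw [Matrix.mul_apply, hcommon i j]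
    simp only [Matrix.add_apply, Matrix.sub_apply, Matrix.smul_apply, Matrix.one_apply,
      hAdef, SimpleGraph.adjMatrix_apply, hJdef, Matrix.of_apply, smul_eq_mul]
    by_cases hij : i = j
    · subst hij
      rw [Finset.inter_self, hdeg i]
      simp only [if_pos rfl, SimpleGraph.irrefl, if_false, mul_zero, mul_one]
      norm_num
      linarith [hrs]
    · by_cases hadj : G.Adj i j
      · rw [hlamh i j hadj]
        simp only [if_neg hij, if_pos hadj, mul_zero, mul_one]
        linarith [hsum]
      · rw [hmuh i j hij hadj]
        simp only [if_neg hij, if_neg hadj, mul_zero, mul_one]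
        ring
  have hmaster : ∀ a b c : ℝ, 0 ≤ a + b * (d:ℝ) + c * (n:ℝ) → 0 ≤ a + b * r →
      0 ≤ a + b * s → (a • (1 : Matrix V V ℝ) + b • A + c • Jm).PosSemidef :=
    fun a b c h1 h2 h3 =>
      SRG14.master A Jm (n:ℝ) (d:ℝ) (mu:ℝ) r s a b c hAt hJt hJJ hAJ hJA hA2 hN0 hts h1 h2 h3
  -- generic entry/trace/sum facts
  have hentry : ∀ (a b c : ℝ) (i j : V), (a • (1 : Matrix V V ℝ) + b • A + c • Jm) i j
      = (if i = j then a else 0) + (if G.Adj i j then b else 0) + c := by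
    intro a b c i j
    simp only [Matrix.add_apply, Matrix.smul_apply, Matrix.one_apply, hAdef,
      SimpleGraph.adjMatrix_apply, hJdef, Matrix.of_apply, smul_eq_mul]
    by_cases hij : i = j <;> by_cases hadj : G.Adj i j <;> simp [hij, hadj]
  have htrace : ∀ a b c : ℝ, (a • (1 : Matrix V V ℝ) + b • A + c • Jm).trace
      = (a + c) * (n:ℝ) := by
    intro a b c
    rw [Matrix.trace]
    have hdiag : ∀ i, (a • (1 : Matrix V V ℝ) + b • A + c • Jm).diag i = a + c := by
      intro i
      rw [Matrix.diag_apply, hentry a b c i i]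
      simp [SimpleGraph.irrefl]
    rw [Finset.sum_congr rfl (fun i _ => hdiag i), Finset.sum_const, Finset.card_univ, hn,
      nsmul_eq_mul]
    ring
  have hsumM : ∀ a b c : ℝ, ∑ i, ∑ j, (a • (1 : Matrix V V ℝ) + b • A + c • Jm) i j
      = (n:ℝ) * (a + b * (d:ℝ) + c * (n:ℝ)) := by
    intro a b c
    have hrowsum : ∀ i, ∑ j, (a • (1 : Matrix V V ℝ) + b • A + c • Jm) i j
        = a + b * (d:ℝ) + c * (n:ℝ) := by
      intro i
      rw [Finset.sum_congr rfl (fun j _ => hentry a b c i j)]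
      rw [Finset.sum_add_distrib, Finset.sum_add_distrib]
      have e1 : ∑ j, (if i = j then a else 0) = a := by simp
      have e2 : ∑ j, (if G.Adj i j then b else 0) = b * (d:ℝ) := by
        have hb : ∀ j, (if G.Adj i j then b else 0) = b * (if G.Adj i j then (1:ℝ) else 0) := by
          intro j; by_cases hj : G.Adj i j <;> simp [hj]
        rw [Finset.sum_congr rfl (fun j _ => hb j), ← Finset.mul_sum, Finset.sum_boole]
        have hfil : Finset.univ.filter (fun k => G.Adj i k) = nbhd G i := rfl
        rw [hfil, hdeg i]
      have e3 : (∑ _j : V, c) = c * (n:ℝ) := by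
        rw [Finset.sum_const, Finset.card_univ, hn, nsmul_eq_mul]; ring
      rw [e1, e2, e3]
    rw [Finset.sum_congr rfl (fun i _ => hrowsum i), Finset.sum_const, Finset.card_univ, hn,
      nsmul_eq_mul]
  have hNinv : (n:ℝ)⁻¹ * (n:ℝ) = 1 := inv_mul_cancel₀ hN0.ne'
  have hsum_smul : ∀ (a b c : ℝ),
      ∑ i, ∑ j, ((n:ℝ)⁻¹ • (a • (1 : Matrix V V ℝ) + b • A + c • Jm)) i j
      = a + b * (d:ℝ) + c * (n:ℝ) := by
    intro a b c
    simp only [Matrix.smul_apply, smul_eq_mul, ← Finset.mul_sum]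
    rw [hsumM a b c, ← mul_assoc, hNinv, one_mul]
  have htrace_smul : ∀ (a b c : ℝ),
      ((n:ℝ)⁻¹ • (a • (1 : Matrix V V ℝ) + b • A + c • Jm)).trace = (n:ℝ)⁻¹ * ((a + c) * (n:ℝ)) := by
    intro a b c
    rw [Matrix.trace_smul, htrace a b c, smul_eq_mul]
  ------------------------------------------------------------------
  -- Part 1 : theta of G
  ------------------------------------------------------------------
  obtain ⟨c', hc'def⟩ : ∃ x : ℝ, x = (1 + r)⁻¹ := ⟨_, rfl⟩
  have hc1 : c' * (1 + r) = 1 := by rw [hc'def]; exact inv_mul_cancel₀ h1r.ne'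
  have hc'0 : 0 ≤ c' := by rw [hc'def]; exact (inv_pos.mpr h1r).le
  set W₁ : Matrix V V ℝ := (n:ℝ)⁻¹ • ((1 - c') • (1 : Matrix V V ℝ) + (-c') • A + c' • Jm)
    with hW₁def
  have hW₁psd : W₁.PosSemidef := by
    apply SRG14.psd_smul (inv_nonneg.mpr hN0.le)
    apply hmaster
    · linarith [mul_nonneg hc'0 (by linarith : (0:ℝ) ≤ (n:ℝ) - 1 - (d:ℝ))]
    · exact ge_of_eq (by linear_combination -hc1)
    · linarith [mul_nonneg hc'0 (by linarith : (0:ℝ) ≤ r - s), hc1]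
  have hW₁tr : W₁.trace = 1 := by
    rw [hW₁def, htrace_smul]
    have : (1 - c' + c') = 1 := by ring
    rw [this, one_mul, hNinv]
  have hW₁zero : ∀ i j, G.Adj i j → W₁ i j = 0 := by
    intro i j hadj
    rw [hW₁def, Matrix.smul_apply, hentry, if_neg (G.ne_of_adj hadj), if_pos hadj]
    simp
  have hW₁nn : ∀ i j, 0 ≤ W₁ i j := by
    intro i j
    rw [hW₁def, Matrix.smul_apply, hentry, smul_eq_mul]
    by_cases hij : i = j
    · subst hij
      rw [if_pos rfl, if_neg (G.irrefl)]
      have : (1 - c' + (0 + c')) = 1 := by ring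
      rw [add_assoc, this, mul_one]
      exact (inv_nonneg.mpr hN0.le)
    · rw [if_neg hij]
      by_cases hadj : G.Adj i j
      · rw [if_pos hadj]
        have : ((0:ℝ) + -c' + c') = 0 := by ring
        rw [this, mul_zero]
      · rw [if_neg hadj]
        have : ((0:ℝ) + 0 + c') = c' := by ring
        rw [this]
        exact mul_nonneg (inv_nonneg.mpr hN0.le) hc'0
  have hW₁val : ∑ i, ∑ j, W₁ i j = κ₁ := by
    rw [hW₁def, hsum_smul]
    apply mul_left_cancel₀ (mul_ne_zero h1r.ne' hDs.ne')
    linear_combination hkey - ((d:ℝ) - s) * (1 + (d:ℝ) - (n:ℝ)) * hc1 - (1 + r) * hκ₁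
  -- dual for G
  obtain ⟨c₀, hc₀def⟩ : ∃ x : ℝ, x = (n:ℝ) * ((d:ℝ) - s)⁻¹ := ⟨_, rfl⟩
  have hc₀ : c₀ * ((d:ℝ) - s) = (n:ℝ) := by
    rw [hc₀def, mul_assoc, inv_mul_cancel₀ hDs.ne', mul_one]
  have hq1 : κ₁ + c₀ * (d:ℝ) + (-1) * (n:ℝ) = 0 := by
    apply mul_left_cancel₀ hDs.ne'
    rw [mul_zero]
    linear_combination hκ₁ + (d:ℝ) * hc₀
  have hq2 : 0 ≤ κ₁ + c₀ * r := by
    have hee : ((d:ℝ) - s) * (κ₁ + c₀ * r) = (n:ℝ) * (r - s) := by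
      linear_combination hκ₁ + r * hc₀
    rcases le_or_gt 0 (κ₁ + c₀ * r) with hcp | hcp
    · exact hcp
    · exfalso
      have h1 : ((d:ℝ) - s) * (κ₁ + c₀ * r) < 0 := mul_neg_of_pos_of_neg hDs hcp
      have h2 : 0 < (n:ℝ) * (r - s) := mul_pos hN0 (by linarith)
      linarith
  have hq3 : κ₁ + c₀ * s = 0 := by
    apply mul_left_cancel₀ hDs.ne'
    rw [mul_zero]
    linear_combination hκ₁ + s * hc₀
  have hY₁ : ((κ₁ • (1 : Matrix V V ℝ) - Jm) + c₀ • A).PosSemidef := by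
    have hform : (κ₁ • (1 : Matrix V V ℝ) - Jm) + c₀ • A
        = κ₁ • (1 : Matrix V V ℝ) + c₀ • A + (-1 : ℝ) • Jm := by module
    rw [hform]
    exact hmaster κ₁ c₀ (-1) (le_of_eq hq1.symm) hq2 (le_of_eq hq3.symm)
  have hZ₁supp : ∀ i j, ¬ G.Adj i j → (c₀ • A) i j = 0 := by
    intro i j hij
    simp [hAdef, Matrix.smul_apply, SimpleGraph.adjMatrix_apply, hij]
  have E1 : schrijverTheta G = κ₁ := by
    apply SRG14.sSup_eq_of_mem_of_ub
    · exact ⟨W₁, hW₁psd, hW₁tr, hW₁zero, hW₁nn, hW₁val.symm⟩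
    · rintro x ⟨B, hB, htrB, hzB, -, rfl⟩
      exact SRG14.dual_bound hY₁ hZ₁supp hB htrB hzB
  have E2 : lovaszTheta G = κ₁ := by
    apply SRG14.sSup_eq_of_mem_of_ub
    · exact ⟨W₁, hW₁psd, hW₁tr, hW₁zero, hW₁val.symm⟩
    · rintro x ⟨B, hB, htrB, hzB, rfl⟩
      exact SRG14.dual_bound hY₁ hZ₁supp hB htrB hzB
  ------------------------------------------------------------------
  -- Part 2 : theta of the complement
  ------------------------------------------------------------------
  have hsinv : s⁻¹ * s = 1 := inv_mul_cancel₀ hs0.ne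
  have hsinvneg : s⁻¹ < 0 := inv_lt_zero.mpr hs0
  set W₂ : Matrix V V ℝ := (n:ℝ)⁻¹ • ((1:ℝ) • (1 : Matrix V V ℝ) + (-s⁻¹) • A + (0:ℝ) • Jm)
    with hW₂def
  have hW₂psd : W₂.PosSemidef := by
    apply SRG14.psd_smul (inv_nonneg.mpr hN0.le)
    apply hmaster
    · linarith [mul_nonneg (by linarith : (0:ℝ) ≤ -s⁻¹) (by linarith : (0:ℝ) ≤ (d:ℝ))]
    · linarith [mul_nonneg (by linarith : (0:ℝ) ≤ -s⁻¹) hr0]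
    · exact ge_of_eq (by linear_combination -hsinv)
  have hW₂tr : W₂.trace = 1 := by
    rw [hW₂def, htrace_smul]
    have : ((1:ℝ) + 0) = 1 := by ring
    rw [this, one_mul, hNinv]
  have hW₂zero : ∀ i j, Gᶜ.Adj i j → W₂ i j = 0 := by
    intro i j hadj
    rw [SimpleGraph.compl_adj] at hadj
    rw [hW₂def, Matrix.smul_apply, hentry, if_neg hadj.1, if_neg hadj.2]
    simp
  have hW₂nn : ∀ i j, 0 ≤ W₂ i j := by
    intro i j
    rw [hW₂def, Matrix.smul_apply, hentry, smul_eq_mul]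
    by_cases hij : i = j
    · subst hij
      rw [if_pos rfl, if_neg (G.irrefl)]
      have : ((1:ℝ) + 0 + 0) = 1 := by ring
      rw [this, mul_one]
      exact inv_nonneg.mpr hN0.le
    · rw [if_neg hij]
      by_cases hadj : G.Adj i j
      · rw [if_pos hadj]
        have : ((0:ℝ) + -s⁻¹ + 0) = -s⁻¹ := by ring
        rw [this]
        exact mul_nonneg (inv_nonneg.mpr hN0.le) (by linarith)
      · rw [if_neg hadj]
        simp
  have hW₂val : ∑ i, ∑ j, W₂ i j = κ₂ := by
    rw [hW₂def, hsum_smul]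
    apply mul_left_cancel₀ hs0.ne
    linear_combination (-(d:ℝ)) * hsinv - hκ₂
  -- dual for the complement
  obtain ⟨e, hedef⟩ : ∃ x : ℝ, x = κ₂ * (1 + r)⁻¹ := ⟨_, rfl⟩
  have he : e * (1 + r) = κ₂ := by
    rw [hedef, mul_assoc, inv_mul_cancel₀ h1r.ne', mul_one]
  have he0 : 0 ≤ e := by
    rw [hedef]
    exact mul_nonneg hκ₂0 (inv_nonneg.mpr h1r.le)
  have hr1 : (κ₂ - e) + (-e) * (d:ℝ) + (e - 1) * (n:ℝ) = 0 := by
    apply mul_left_cancel₀ (mul_ne_zero hs0.ne h1r.ne')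
    rw [mul_zero]
    linear_combination -hkey + ((1 + r) - (1 + (d:ℝ) - (n:ℝ))) * hκ₂
      - s * (1 + (d:ℝ) - (n:ℝ)) * he
  have hr2 : (κ₂ - e) + (-e) * r = 0 := by linear_combination -he
  have hr3 : 0 ≤ (κ₂ - e) + (-e) * s := by
    have hee : (κ₂ - e) + (-e) * s = e * (r - s) := by linear_combination -he
    rw [hee]
    exact mul_nonneg he0 (by linarith)
  have hY₂ : ((κ₂ • (1 : Matrix V V ℝ) - Jm) + e • (Jm - 1 - A)).PosSemidef := by
    have hform : (κ₂ • (1 : Matrix V V ℝ) - Jm) + e • (Jm - 1 - A)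
        = (κ₂ - e) • (1 : Matrix V V ℝ) + (-e) • A + (e - 1) • Jm := by module
    rw [hform]
    exact hmaster (κ₂ - e) (-e) (e - 1) (le_of_eq hr1.symm) (le_of_eq hr2.symm) hr3
  have hZ₂supp : ∀ i j, ¬ Gᶜ.Adj i j → (e • (Jm - 1 - A)) i j = 0 := by
    intro i j hc
    rw [SimpleGraph.compl_adj] at hc
    push_neg at hc
    simp only [Matrix.smul_apply, Matrix.sub_apply, hJdef, Matrix.of_apply, hAdef,
      SimpleGraph.adjMatrix_apply, Matrix.one_apply, smul_eq_mul]
    by_cases hij : i = j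
    · subst hij
      simp [SimpleGraph.irrefl]
    · have hadj : G.Adj i j := hc hij
      rw [if_neg hij, if_pos hadj]
      ring
  have E3 : schrijverTheta Gᶜ = κ₂ := by
    apply SRG14.sSup_eq_of_mem_of_ub
    · exact ⟨W₂, hW₂psd, hW₂tr, hW₂zero, hW₂nn, hW₂val.symm⟩
    · rintro x ⟨B, hB, htrB, hzB, -, rfl⟩
      exact SRG14.dual_bound hY₂ hZ₂supp hB htrB hzB
  have E4 : lovaszTheta Gᶜ = κ₂ := by
    apply SRG14.sSup_eq_of_mem_of_ub
    · exact ⟨W₂, hW₂psd, hW₂tr, hW₂zero, hW₂val.symm⟩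
    · rintro x ⟨B, hB, htrB, hzB, rfl⟩
      exact SRG14.dual_bound hY₂ hZ₂supp hB htrB hzB
  have hprod : κ₁ * κ₂ = (n:ℝ) := by
    apply mul_left_cancel₀ (mul_ne_zero hs0.ne hDs.ne')
    linear_combination (κ₂ * s) * hκ₁ + (-((n:ℝ) * s)) * hκ₂
  rw [hκ₁def] at E1 E2
  rw [hκ₂def] at E3 E4
  rw [hκ₁def, hκ₂def] at hprod
  exact ⟨E1, E2, E3, E4, by rw [E1, E3]; exact hprod, by rw [E2, E4]; exact hprod⟩
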